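/- Let G be a finite graph, W ⊆ V(G), and let s, ε > 0 be real numbers. If G contains an (s, 5ε)-tame W-cloud, then G also contains a strongly (s, ε)-tame W-cloud. -/

import Mathlib

open Finset

universe u

variable {V : Type u} [Fintype V] [DecidableEq V]

/-- `u` and `v` both belong to the subgraph `H` and are connected in `H`. -/
def CReach {G : SimpleGraph V} (H : G.Subgraph) (u v : V) : Prop :=
  ∃ (hu : u ∈ H.verts) (hv : v ∈ H.verts), H.coe.Reachable ⟨u, hu⟩ ⟨v, hv⟩

/-- The vertex set of the connected component `H_w` of `H` containing `w`. -/
def cloudComp {G : SimpleGraph V} (H : G.Subgraph) (w : V) : Set V :=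
  {v | CReach H w v}

/-- `n(H, U) = Σ_{w ∈ U} |V(H_w)|`. -/
noncomputable def cloudSize {G : SimpleGraph V} (H : G.Subgraph) (U : Finset V) : ℕ :=
  ∑ w ∈ U, (cloudComp H w).ncard

/-- `H` is a `W`-cloud in `G`: a forest subgraph of `G` in which every connected
component contains exactly one vertex of `W`. -/
def IsCloud (G : SimpleGraph V) (W : Finset V) (H : G.Subgraph) : Prop :=
  H.coe.IsAcyclic ∧ (↑W : Set V) ⊆ H.verts ∧
    ∀ v ∈ H.verts, ∃! w, w ∈ W ∧ CReach H v w

/-- `H` is an `(s, ε)`-tame `W`-cloud: `n(H, U) ≥ s` for every `U ⊆ W` with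
`|U| ≥ (1 - ε)|W|`. -/
def IsTameCloud (G : SimpleGraph V) (W : Finset V) (H : G.Subgraph) (s ε : ℝ) : Prop :=
  IsCloud G W H ∧
    ∀ U ⊆ W, (1 - ε) * (W.card : ℝ) ≤ (U.card : ℝ) → s ≤ (cloudSize H U : ℝ)

/-- `H` is a strongly `(s, ε)`-tame `W`-cloud: `n(H, U) ≥ s + 3 n(H, W \ U)` for every
`U ⊆ W` with `|U| ≥ (1 - ε)|W|`. -/
def IsStronglyTameCloud (G : SimpleGraph V) (W : Finset V) (H : G.Subgraph) (s ε : ℝ) : Prop :=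
  IsCloud G W H ∧
    ∀ U ⊆ W, (1 - ε) * (W.card : ℝ) ≤ (U.card : ℝ) →
      s + 3 * (cloudSize H (W \ U) : ℝ) ≤ (cloudSize H U : ℝ)


set_option linter.unusedSectionVars false

lemma creach_refl {G : SimpleGraph V} {H : G.Subgraph} {w : V} (hw : w ∈ H.verts) :
    CReach H w w := ⟨hw, hw, .refl _⟩

lemma creach_symm {G : SimpleGraph V} {H : G.Subgraph} {u v : V} :
    CReach H u v → CReach H v u := fun ⟨hu, hv, h⟩ => ⟨hv, hu, h.symm⟩

lemma creach_trans {G : SimpleGraph V} {H : G.Subgraph} {u v x : V} :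
    CReach H u v → CReach H v x → CReach H u x := by
  rintro ⟨hu, hv, h1⟩ ⟨hv', hx, h2⟩
  exact ⟨hu, hx, h1.trans h2⟩

lemma creach_right {G : SimpleGraph V} {H : G.Subgraph} {u v : V} (h : CReach H u v) :
    v ∈ H.verts := h.2.1

lemma creach_mono {G : SimpleGraph V} {H₁ H₂ : G.Subgraph} (hle : H₁ ≤ H₂) {u v : V} :
    CReach H₁ u v → CReach H₂ u v := by
  rintro ⟨hu, hv, h⟩
  refine ⟨hle.1 hu, hle.1 hv, ?_⟩
  have := h.map (SimpleGraph.Subgraph.inclusion hle)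
  exact this

lemma creach_adj {G : SimpleGraph V} {H : G.Subgraph} {u v : V} (h : H.Adj u v) :
    CReach H u v :=
  ⟨H.edge_vert h, H.edge_vert h.symm, SimpleGraph.Adj.reachable (by simpa using h)⟩

lemma cloudComp_subset {G : SimpleGraph V} {H : G.Subgraph} {w : V} :
    cloudComp H w ⊆ H.verts := fun _ h => creach_right h

/-- Any component can be trimmed to a connected subset of any prescribed smaller size. -/
lemma trim {G : SimpleGraph V} (H : G.Subgraph) (w : V) (hw : w ∈ H.verts) :
    ∀ j : ℕ, 1 ≤ j → j ≤ (cloudComp H w).ncard →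
    ∃ S : Set V, w ∈ S ∧ S ⊆ cloudComp H w ∧ S.ncard = j ∧
      ∀ v ∈ S, CReach (H.induce S) w v := by
  intro j
  induction j with
  | zero => omega
  | succ j ih =>
    intro _ hj2
    rcases Nat.eq_zero_or_pos j with rfl | hj
    · refine ⟨{w}, rfl, ?_, by simp, ?_⟩
      · rintro v hv
        rw [Set.mem_singleton_iff] at hv
        subst hv
        exact creach_refl hw
      · rintro v hv
        rw [Set.mem_singleton_iff] at hv
        subst hv
        exact creach_refl (Set.mem_singleton _)
    · obtain ⟨S, hwS, hSc, hcard, hconn⟩ := ih hj (le_trans (Nat.le_succ _) hj2)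
      have hfin : S.Finite := Set.toFinite S
      have hne : ¬ (cloudComp H w ⊆ S) := by
        intro hsub
        have : cloudComp H w = S := Set.Subset.antisymm hsub hSc
        rw [this, hcard] at hj2
        omega
      obtain ⟨v, hvc, hvS⟩ := Set.not_subset.mp hne
      obtain ⟨hw', hv', hr⟩ := hvc
      obtain ⟨p⟩ := hr
      have hbw : (⟨w, hw'⟩ : H.verts) ∈ (Subtype.val ⁻¹' S : Set H.verts) := hwS
      have hbv : (⟨v, hv'⟩ : H.verts) ∉ (Subtype.val ⁻¹' S : Set H.verts) := hvS
      obtain ⟨d, hd, hdf, hds⟩ := p.exists_boundary_dart _ hbw hbv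
      set x : V := (d.fst : V) with hxdef
      set y : V := (d.snd : V) with hydef
      have hxS : x ∈ S := hdf
      have hyS : y ∉ S := hds
      have hadj : H.Adj x y := by
        have := d.adj
        simpa using this
      have hyc : y ∈ cloudComp H w := creach_trans (hSc hxS) (creach_adj hadj)
      refine ⟨insert y S, Set.mem_insert_of_mem _ hwS, ?_, ?_, ?_⟩
      · exact Set.insert_subset hyc hSc
      · rw [Set.ncard_insert_of_notMem hyS hfin, hcard]
      · have hle : H.induce S ≤ H.induce (insert y S) :=
          SimpleGraph.Subgraph.induce_mono_right (Set.subset_insert _ _)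
        intro v' hv'
        rcases hv' with rfl | hv'
        · refine creach_trans (creach_mono hle (hconn x hxS)) (creach_adj ?_)
          exact ⟨Set.mem_insert_of_mem _ hxS, Set.mem_insert _ _, hadj⟩
        · exact creach_mono hle (hconn v' hv')

lemma acyclic_of_le {G : SimpleGraph V} {H₁ H₂ : G.Subgraph} (hle : H₁ ≤ H₂)
    (hac : H₂.coe.IsAcyclic) : H₁.coe.IsAcyclic := by
  intro v p hp
  exact hac (p.map (SimpleGraph.Subgraph.inclusion hle))
    (hp.map (SimpleGraph.Subgraph.inclusion.injective hle))

/-- Build a trimmed cloud with prescribed component sizes. -/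
lemma cloud_trim {G : SimpleGraph V} {W : Finset V} {H : G.Subgraph}
    (hH : IsCloud G W H) (g : V → ℕ)
    (hg : ∀ w ∈ W, 1 ≤ g w ∧ g w ≤ (cloudComp H w).ncard) :
    ∃ H' : G.Subgraph, IsCloud G W H' ∧
      ∀ U ⊆ W, cloudSize H' U = ∑ w ∈ U, g w := by
  obtain ⟨hac, hWv, huniq⟩ := hH
  have key : ∀ w : V, ∃ S : Set V, w ∈ W →
      w ∈ S ∧ S ⊆ cloudComp H w ∧ S.ncard = g w ∧ ∀ v ∈ S, CReach (H.induce S) w v := by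
    intro w
    by_cases hw : w ∈ W
    · obtain ⟨S, h1, h2, h3, h4⟩ := trim H w (hWv hw) (g w) (hg w hw).1 (hg w hw).2
      exact ⟨S, fun _ => ⟨h1, h2, h3, h4⟩⟩
    · exact ⟨∅, fun h => absurd h hw⟩
  choose S hS using key
  set X : Set V := ⋃ w ∈ (W : Set V), S w with hXdef
  have hSX : ∀ w ∈ W, S w ⊆ X := fun w hw =>
    Set.subset_biUnion_of_mem (show w ∈ (W : Set V) from hw)
  have hXv : X ⊆ H.verts := by
    intro v hv
    simp only [hXdef, Set.mem_iUnion] at hv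
    obtain ⟨w, hw, hvS⟩ := hv
    exact cloudComp_subset ((hS w hw).2.1 hvS)
  set H' : G.Subgraph := H.induce X with hH'def
  have hle : H' ≤ H := ⟨hXv, fun {v w} h => h.2.2⟩
  have hSle : ∀ w ∈ W, H.induce (S w) ≤ H' :=
    fun w hw => SimpleGraph.Subgraph.induce_mono_right (hSX w hw)
  have hdisj : ∀ w ∈ W, ∀ w' ∈ W, ∀ v, CReach H w v → CReach H w' v → w = w' := by
    intro w hw w' hw' v h1 h2
    obtain ⟨z, _, hz⟩ := huniq v (creach_right h1)
    rw [hz w ⟨hw, creach_symm h1⟩, hz w' ⟨hw', creach_symm h2⟩]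
  have hcomp : ∀ w ∈ W, cloudComp H' w = S w := by
    intro w hw
    obtain ⟨hwS, hSc, hScard, hSconn⟩ := hS w hw
    apply Set.Subset.antisymm
    · intro v hv
      have hvX : v ∈ X := creach_right hv
      simp only [hXdef, Set.mem_iUnion] at hvX
      obtain ⟨w', hw', hvS'⟩ := hvX
      have h1 : CReach H w v := creach_mono hle hv
      have h2 : CReach H w' v := creach_mono hle
        (creach_mono (hSle w' hw') ((hS w' hw').2.2.2 v hvS'))
      rwa [hdisj w hw w' hw' v h1 h2]
    · intro v hv
      exact creach_mono (hSle w hw) (hSconn v hv)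
  have hWX : (↑W : Set V) ⊆ X := fun w hw => hSX w hw (hS w hw).1
  refine ⟨H', ⟨acyclic_of_le hle hac, hWX, ?_⟩, ?_⟩
  · intro v hv
    have hvX : v ∈ X := hv
    have hvX' := hvX
    simp only [hXdef, Set.mem_iUnion] at hvX'
    obtain ⟨w, hw, hvS⟩ := hvX'
    have hvC : CReach H' w v := by
      have : v ∈ cloudComp H' w := by rw [hcomp w hw]; exact hvS
      exact this
    refine ⟨w, ⟨hw, creach_symm hvC⟩, ?_⟩
    rintro w' ⟨hw', hr'⟩
    exact (hdisj w' hw' w hw v (creach_symm (creach_mono hle hr'))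
      (creach_mono hle hvC))
  · intro U hU
    unfold cloudSize
    apply Finset.sum_congr rfl
    intro w hw
    rw [hcomp w (hU hw), (hS w (hU hw)).2.2.1]

/-- Selection of the `t` elements with largest `f`-values. -/
lemma exists_top (f : V → ℕ) : ∀ (t : ℕ) (W : Finset V), t ≤ W.card →
    ∃ T ⊆ W, T.card = t ∧ ∀ x ∈ T, ∀ y ∈ W \ T, f y ≤ f x := by
  intro t
  induction t with
  | zero => exact fun W _ => ⟨∅, empty_subset _, rfl, by simp⟩
  | succ t ih =>
    intro W ht
    obtain ⟨T, hTW, hTc, htop⟩ := ih W (le_trans (Nat.le_succ _) ht)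
    have hne : (W \ T).Nonempty := by
      rw [sdiff_nonempty]
      intro hsub
      have := Finset.card_le_card hsub
      omega
    obtain ⟨y₀, hy₀, hy₀max⟩ := Finset.exists_max_image (W \ T) f hne
    refine ⟨insert y₀ T, ?_, ?_, ?_⟩
    · exact Finset.insert_subset (Finset.mem_sdiff.mp hy₀).1 hTW
    · rw [Finset.card_insert_of_notMem (Finset.mem_sdiff.mp hy₀).2, hTc]
    · intro x hx y hy
      have hyT : y ∈ W \ T := by
        rw [Finset.mem_sdiff] at hy ⊢
        exact ⟨hy.1, fun h => hy.2 (Finset.mem_insert_of_mem h)⟩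
      rcases Finset.mem_insert.mp hx with rfl | hx
      · exact hy₀max y hyT
      · exact htop x hx y hyT


/-- If `G` contains an `(s, 5ε)`-tame `W`-cloud, then `G` contains a strongly
`(s, ε)`-tame `W`-cloud. -/
theorem exists_stronglyTameCloud (G : SimpleGraph V) (W : Finset V) (s ε : ℝ)
    (hs : 0 < s) (hε : 0 < ε)
    (h : ∃ H : G.Subgraph, IsTameCloud G W H s (5 * ε)) :
    ∃ H : G.Subgraph, IsStronglyTameCloud G W H s ε := by
  
  obtain ⟨H, hcloud, htame⟩ := h
  set m : ℕ := W.card with hm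
  by_cases hcon : (1 - 5 * ε) * (m : ℝ) ≤ 0
  · exfalso
    have := htame ∅ (empty_subset _) (by simpa using hcon)
    simp [cloudSize] at this
    linarith
  push_neg at hcon
  have hm0 : 0 < (m : ℝ) := by
    by_contra hm0
    push_neg at hm0
    nlinarith
  have h5ε : 5 * ε * (m : ℝ) < m := by nlinarith
  set k : ℕ := ⌊ε * (m : ℝ)⌋₊ with hk
  have hkle : (k : ℝ) ≤ ε * m := Nat.floor_le (by positivity)
  rcases Nat.eq_zero_or_pos k with hk0 | hkpos
  · -- small case: H itself works
    refine ⟨H, hcloud, ?_⟩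
    intro U hUW hUcard
    have hεm1 : ε * (m : ℝ) < 1 := by
      rw [hk] at hk0
      exact_mod_cast (Nat.floor_eq_zero.mp hk0)
    have hUm : m ≤ U.card := by
      by_contra hlt
      push_neg at hlt
      have h1 : (U.card : ℝ) + 1 ≤ m := by exact_mod_cast hlt
      nlinarith
    have hUeq : U = W := Finset.eq_of_subset_of_card_le hUW hUm
    subst hUeq
    rw [Finset.sdiff_self]
    have : s ≤ (cloudSize H U : ℝ) := htame U le_rfl (by nlinarith)
    simpa [cloudSize] using this
  · -- main case
    have hn1 : ∀ w ∈ W, 1 ≤ (cloudComp H w).ncard := by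
      intro w hw
      have : w ∈ cloudComp H w := creach_refl (hcloud.2.1 hw)
      have hpos : 0 < (cloudComp H w).ncard :=
        Set.ncard_pos (Set.toFinite _) |>.mpr ⟨w, this⟩
      omega
    set n : V → ℕ := fun w => (cloudComp H w).ncard with hn
    have h4k : 4 * k ≤ m := by
      have : (5 * k : ℝ) ≤ 5 * (ε * m) := by linarith
      have h5k : (5 * k : ℝ) < m := by nlinarith
      have : 5 * k < m := by exact_mod_cast h5k
      omega
    obtain ⟨T, hTW, hTc, htop⟩ := exists_top n (4 * k) W h4k
    have hTne : T.Nonempty := by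
      rw [← Finset.card_pos, hTc]; omega
    have hTimg : (T.image n).Nonempty := hTne.image n
    set a : ℕ := (T.image n).min' hTimg with ha
    have haT : ∀ w ∈ T, a ≤ n w := fun w hw =>
      Finset.min'_le _ _ (Finset.mem_image_of_mem n hw)
    obtain ⟨w₀, hw₀T, hw₀a⟩ : ∃ w₀ ∈ T, n w₀ = a := by
      have := Finset.min'_mem (T.image n) hTimg
      rw [Finset.mem_image] at this
      obtain ⟨w₀, hw₀, heq⟩ := this
      exact ⟨w₀, hw₀, heq⟩
    have ha1 : 1 ≤ a := hw₀a ▸ hn1 w₀ (hTW hw₀T)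
    have haWT : ∀ w ∈ W \ T, n w ≤ a := fun w hw => hw₀a ▸ htop w₀ hw₀T w hw
    set g : V → ℕ := fun w => min (n w) a with hgdef
    have hg : ∀ w ∈ W, 1 ≤ g w ∧ g w ≤ (cloudComp H w).ncard := by
      intro w hw
      exact ⟨le_min (hn1 w hw) ha1, min_le_left _ _⟩
    obtain ⟨H', hcloud', hsize⟩ := cloud_trim hcloud g hg
    have hgT : ∀ w ∈ T, g w = a := fun w hw => min_eq_right (haT w hw)
    have hgWT : ∀ w ∈ W \ T, g w = n w := fun w hw => min_eq_left (haWT w hw)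
    have hga : ∀ w, g w ≤ a := fun w => min_le_right _ _
    have hsumW : ∑ w ∈ W, g w = 4 * k * a + ∑ w ∈ W \ T, n w := by
      rw [← Finset.sum_sdiff hTW, Finset.sum_congr rfl hgWT, Finset.sum_congr rfl hgT]
      simp [hTc, mul_comm]
      ring
    have hsWT : s ≤ ((∑ w ∈ W \ T, n w : ℕ) : ℝ) := by
      have := htame (W \ T) (Finset.sdiff_subset) ?_
      · simpa [cloudSize, hn] using this
      · have hcard : ((W \ T).card : ℝ) = (m : ℝ) - 4 * k := by
          rw [Finset.card_sdiff_of_subset hTW, hTc]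
          push_cast [Nat.cast_sub (by omega : 4 * k ≤ W.card)]
          ring
        rw [hcard]
        nlinarith
    refine ⟨H', hcloud', ?_⟩
    intro U hUW hUcard
    rw [hsize U hUW, hsize (W \ U) Finset.sdiff_subset]
    have htk : (W \ U).card ≤ k := by
      apply Nat.le_floor
      have : ((W \ U).card : ℝ) = (m : ℝ) - U.card := by
        rw [Finset.card_sdiff_of_subset hUW]
        push_cast [Nat.cast_sub (Finset.card_le_card hUW)]
        rfl
      rw [this]
      linarith
    have hA : ((∑ w ∈ W \ U, g w : ℕ) : ℝ) ≤ (k : ℝ) * a := by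
      have h1 : ∑ w ∈ W \ U, g w ≤ (W \ U).card * a :=
        Finset.sum_le_card_nsmul _ _ _ (fun w _ => hga w)
      have h2 : (W \ U).card * a ≤ k * a := Nat.mul_le_mul_right a htk
      exact_mod_cast h1.trans h2
    have hAB : ((∑ w ∈ W \ U, g w : ℕ) : ℝ) + ((∑ w ∈ U, g w : ℕ) : ℝ)
        = ((∑ w ∈ W, g w : ℕ) : ℝ) := by
      exact_mod_cast congrArg Nat.cast (Finset.sum_sdiff hUW)
    have hC : ((∑ w ∈ W, g w : ℕ) : ℝ)
        = 4 * (k : ℝ) * a + ((∑ w ∈ W \ T, n w : ℕ) : ℝ) := by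
      rw [hsumW]; push_cast; ring
    linarith
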